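/- Fix an integer n > 3, real numbers 0 < c₁ < c₂, and T > 0. For i = 1,2 let w_i : [0,T) → ℝ be twice differentiable with w_i(0) = 1, w_i'(0) = 0, w_i(t) > 0 for all t ∈ [0,T), and satisfying −w_i''(t) = 1/(c_i·(n−1)·w_i(t)^n) for all t ∈ [0,T). Then w₁(t) < w₂(t) for every t ∈ (0,T); that is, the solution of the Cauchy problem is strictly increasing with respect to the parameter c. -/
import Mathlib


open Set

/-- Strict monotonicity with respect to the parameter `c` of the solution of the
Cauchy problem `−w'' = 1/(c(n−1)wⁿ)`, `w(0) = 1`, `w'(0) = 0`. -/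
theorem monotonicity_in_parameter
    (n : ℕ) (hn : 3 < n) (c₁ c₂ : ℝ) (hc₁ : 0 < c₁) (hc : c₁ < c₂) (T : ℝ) (hT : 0 < T)
    (w₁ w₁' w₁'' w₂ w₂' w₂'' : ℝ → ℝ)
    (hw₁' : ∀ t ∈ Ico (0:ℝ) T, HasDerivWithinAt w₁ (w₁' t) (Ico (0:ℝ) T) t)
    (hw₁'' : ∀ t ∈ Ico (0:ℝ) T, HasDerivWithinAt w₁' (w₁'' t) (Ico (0:ℝ) T) t)
    (hw₂' : ∀ t ∈ Ico (0:ℝ) T, HasDerivWithinAt w₂ (w₂' t) (Ico (0:ℝ) T) t)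
    (hw₂'' : ∀ t ∈ Ico (0:ℝ) T, HasDerivWithinAt w₂' (w₂'' t) (Ico (0:ℝ) T) t)
    (hw₁0 : w₁ 0 = 1) (hw₁'0 : w₁' 0 = 0)
    (hw₂0 : w₂ 0 = 1) (hw₂'0 : w₂' 0 = 0)
    (hw₁pos : ∀ t ∈ Ico (0:ℝ) T, 0 < w₁ t)
    (hw₂pos : ∀ t ∈ Ico (0:ℝ) T, 0 < w₂ t)
    (hode₁ : ∀ t ∈ Ico (0:ℝ) T, -(w₁'' t) = 1 / (c₁ * ((n:ℝ) - 1) * (w₁ t) ^ n))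
    (hode₂ : ∀ t ∈ Ico (0:ℝ) T, -(w₂'' t) = 1 / (c₂ * ((n:ℝ) - 1) * (w₂ t) ^ n)) :
    ∀ t ∈ Ioo (0:ℝ) T, w₁ t < w₂ t := by
  intro t ht
  obtain ⟨ht0, htT⟩ := ht
  have hn1 : (0:ℝ) < (n:ℝ) - 1 := by
    have : (3:ℝ) < n := by exact_mod_cast hn
    linarith
  have hnne : n ≠ 0 := by omega
  have hc₂ : 0 < c₂ := hc₁.trans hc
  have hcw₁ : ContinuousOn w₁ (Ico 0 T) := fun s hs => (hw₁' s hs).continuousWithinAt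
  have hcw₂ : ContinuousOn w₂ (Ico 0 T) := fun s hs => (hw₂' s hs).continuousWithinAt
  have hcw₁' : ContinuousOn w₁' (Ico 0 T) := fun s hs => (hw₁'' s hs).continuousWithinAt
  have hcw₂' : ContinuousOn w₂' (Ico 0 T) := fun s hs => (hw₂'' s hs).continuousWithinAt
  set g : ℝ → ℝ := fun s => c₂ * (w₂ s) ^ n - c₁ * (w₁ s) ^ n with hgdef
  have hg0 : 0 < g 0 := by
    simp only [hgdef, hw₁0, hw₂0, one_pow, mul_one]
    linarith
  have hgcont : ContinuousOn g (Ico 0 T) :=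
    (continuousOn_const.mul (hcw₂.pow n)).sub (continuousOn_const.mul (hcw₁.pow n))
  -- key: positivity of the second derivative of the difference
  have key : ∀ s ∈ Ico (0:ℝ) T, 0 < g s → 0 < w₂'' s - w₁'' s := by
    intro s hs hgs
    have h1 := hode₁ s hs
    have h2 := hode₂ s hs
    have hw1 := hw₁pos s hs
    have hw2 := hw₂pos s hs
    have hp1 : 0 < c₁ * ((n:ℝ) - 1) * (w₁ s) ^ n := by positivity
    have hlt : c₁ * ((n:ℝ) - 1) * (w₁ s) ^ n < c₂ * ((n:ℝ) - 1) * (w₂ s) ^ n := by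
      have hgs' : c₁ * (w₁ s) ^ n < c₂ * (w₂ s) ^ n := by
        have : 0 < c₂ * (w₂ s) ^ n - c₁ * (w₁ s) ^ n := hgs
        linarith
      nlinarith
    have hdiv := one_div_lt_one_div_of_lt hp1 hlt
    linarith
  -- main lemma: if g > 0 on [0, m) then w₁ m < w₂ m
  have main : ∀ m, 0 < m → m ≤ t → (∀ s ∈ Ico (0:ℝ) m, 0 < g s) → w₁ m < w₂ m := by
    intro m hm0 hmt hgpos
    have hImm : Icc (0:ℝ) m ⊆ Ico (0:ℝ) T := fun s hs =>
      ⟨hs.1, lt_of_le_of_lt (hs.2.trans hmt) htT⟩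
    have hderiv2 : ∀ x ∈ Ioo (0:ℝ) m,
        HasDerivAt w₂' (w₂'' x) x ∧ HasDerivAt w₁' (w₁'' x) x ∧
        HasDerivAt w₂ (w₂' x) x ∧ HasDerivAt w₁ (w₁' x) x := by
      intro x hx
      have hxI : x ∈ Ico (0:ℝ) T := hImm ⟨hx.1.le, hx.2.le⟩
      have hnhds : Ico (0:ℝ) T ∈ nhds x :=
        Ico_mem_nhds hx.1 (lt_of_lt_of_le hx.2 (hmt.trans htT.le))
      exact ⟨(hw₂'' x hxI).hasDerivAt hnhds, (hw₁'' x hxI).hasDerivAt hnhds,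
        (hw₂' x hxI).hasDerivAt hnhds, (hw₁' x hxI).hasDerivAt hnhds⟩
    have hmono' : StrictMonoOn (fun s => w₂' s - w₁' s) (Icc 0 m) := by
      apply strictMonoOn_of_deriv_pos (convex_Icc 0 m)
      · exact (hcw₂'.mono hImm).sub (hcw₁'.mono hImm)
      · intro x hx
        rw [interior_Icc] at hx
        obtain ⟨hd2, hd1, -, -⟩ := hderiv2 x hx
        have hds : HasDerivAt (fun s => w₂' s - w₁' s) (w₂'' x - w₁'' x) x := hd2.sub hd1
        rw [hds.deriv]
        exact key x (hImm ⟨hx.1.le, hx.2.le⟩) (hgpos x ⟨hx.1.le, hx.2⟩)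
    have hv' : ∀ s ∈ Ioo (0:ℝ) m, 0 < w₂' s - w₁' s := by
      intro s hs
      have := hmono' (left_mem_Icc.2 hm0.le) ⟨hs.1.le, hs.2.le⟩ hs.1
      simpa [hw₁'0, hw₂'0] using this
    have hmono : StrictMonoOn (fun s => w₂ s - w₁ s) (Icc 0 m) := by
      apply strictMonoOn_of_deriv_pos (convex_Icc 0 m)
      · exact (hcw₂.mono hImm).sub (hcw₁.mono hImm)
      · intro x hx
        rw [interior_Icc] at hx
        obtain ⟨-, -, hd2, hd1⟩ := hderiv2 x hx
        have hds : HasDerivAt (fun s => w₂ s - w₁ s) (w₂' x - w₁' x) x := hd2.sub hd1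
        rw [hds.deriv]
        exact hv' x hx
    have := hmono (left_mem_Icc.2 hm0.le) (right_mem_Icc.2 hm0.le) hm0
    simp only [hw₁0, hw₂0, sub_self] at this
    linarith
  -- g is positive on all of [0, t]
  have gpos : ∀ s ∈ Icc (0:ℝ) t, 0 < g s := by
    by_contra h
    push_neg at h
    obtain ⟨s₀, hs₀, hgs₀⟩ := h
    set B := {s | s ∈ Icc (0:ℝ) t ∧ g s ≤ 0} with hBdef
    have hBne : B.Nonempty := ⟨s₀, hs₀, hgs₀⟩
    have hBbd : BddBelow B := ⟨0, fun x hx => hx.1.1⟩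
    have hIcc : Icc (0:ℝ) t ⊆ Ico (0:ℝ) T := fun s hs => ⟨hs.1, lt_of_le_of_lt hs.2 htT⟩
    have hBclosed : IsClosed B := by
      have : B = Icc (0:ℝ) t ∩ g ⁻¹' (Iic 0) := by
        ext x; simp only [hBdef, Set.mem_inter_iff, Set.mem_setOf_eq, Set.mem_preimage,
          Set.mem_Iic]
      rw [this]
      exact (hgcont.mono hIcc).preimage_isClosed_of_isClosed isClosed_Icc isClosed_Iic
    set m := sInf B with hmdef
    have hmB : m ∈ B := hBclosed.csInf_mem hBne hBbd
    obtain ⟨hmIcc, hgm⟩ := hmB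
    have hm0 : 0 < m := by
      rcases lt_or_eq_of_le hmIcc.1 with h | h
      · exact h
      · exfalso; rw [← h] at hgm; linarith
    have hgpos : ∀ s ∈ Ico (0:ℝ) m, 0 < g s := by
      intro s hs
      by_contra hgs
      push_neg at hgs
      have hsB : s ∈ B := ⟨⟨hs.1, (hs.2.le.trans hmIcc.2)⟩, hgs⟩
      exact absurd (csInf_le hBbd hsB) (not_le.2 hs.2)
    have hlt := main m hm0 hmIcc.2 hgpos
    have hw1m : 0 < w₁ m := hw₁pos m (hIcc hmIcc)
    have hpow : (w₁ m) ^ n < (w₂ m) ^ n := pow_lt_pow_left₀ hlt hw1m.le hnne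
    have : 0 < g m := by
      have h1 : c₁ * (w₁ m) ^ n < c₂ * (w₂ m) ^ n := by
        have hp : 0 < (w₁ m) ^ n := pow_pos hw1m n
        nlinarith
      simp only [hgdef]; linarith
    linarith
  exact main t ht0 le_rfl fun s hs => gpos s ⟨hs.1, hs.2.le⟩
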